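/- Let A be a self-adjoint operator (symmetric matrix) on ℝⁿ with eigenvalues μ = (μ₁,...,μₙ) and μ₀ ∈ ℝ. Then trace(A ∘ T_k^∞(μ₀, A)) = (k+1) σ_{k+1}^∞(μ₀, μ) − μ₀ σ_k^∞(μ₀, μ). -/

import Mathlib

/-- The `k`-th elementary symmetric polynomial of `μ : Fin n → ℝ`. -/
noncomputable def esymm {n : ℕ} (k : ℕ) (μ : Fin n → ℝ) : ℝ :=
  ∑ s ∈ Finset.powersetCard k (Finset.univ : Finset (Fin n)), ∏ i ∈ s, μ i

/-- The weighted elementary symmetric function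
`σ_k^∞(μ₀, μ) = ∑_{j=0}^k (μ₀^j / j!) σ_{k-j}(μ)`. -/
noncomputable def esymmInf {n : ℕ} (k : ℕ) (μ0 : ℝ) (μ : Fin n → ℝ) : ℝ :=
  ∑ j ∈ Finset.range (k + 1), μ0 ^ j / (Nat.factorial j) * esymm (k - j) μ

/-- The weighted Newton transformations: `T₀^∞ = I` and
`T_k^∞(μ₀, A) = σ_k^∞(μ₀, μ) I − A T_{k-1}^∞(μ₀, A)`, where `μ` are the eigenvalues of `A`. -/
noncomputable def newtonInf {n : ℕ} (μ0 : ℝ) (μ : Fin n → ℝ)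
    (A : Matrix (Fin n) (Fin n) ℝ) : ℕ → Matrix (Fin n) (Fin n) ℝ
  | 0 => 1
  | (k + 1) => esymmInf (k + 1) μ0 μ • (1 : Matrix (Fin n) (Fin n) ℝ) - A * newtonInf μ0 μ A k

open Finset Matrix

lemma eval_esymm' {n : ℕ} (k : ℕ) (μ : Fin n → ℝ) :
    MvPolynomial.eval μ (MvPolynomial.esymm (Fin n) ℝ k) = esymm k μ := by
  simp [MvPolynomial.esymm, esymm]

lemma eval_psum' {n : ℕ} (k : ℕ) (μ : Fin n → ℝ) :
    MvPolynomial.eval μ (MvPolynomial.psum (Fin n) ℝ k) = ∑ i, μ i ^ k := by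
  simp [MvPolynomial.psum]

lemma neg_one_pow_helper {i m : ℕ} (h : i ≤ m) : ((-1 : ℝ)) ^ m * (-1) ^ (m - i) = (-1) ^ i := by
  obtain ⟨d, rfl⟩ := Nat.exists_eq_add_of_le h
  rw [← pow_add, show i + d + (i + d - i) = i + 2 * d by omega, pow_add, pow_mul]
  norm_num

/-- Newton's identity, evaluated over the reals. -/
lemma newton_real {n : ℕ} (m : ℕ) (μ : Fin n → ℝ) :
    ∑ i ∈ range (m + 1), (-1 : ℝ) ^ i * esymm (m - i) μ * (∑ x, μ x ^ (i + 1))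
      = (m + 1 : ℝ) * esymm (m + 1) μ := by
  have h := congrArg (MvPolynomial.eval μ) (MvPolynomial.mul_esymm_eq_sum (Fin n) ℝ (m + 1))
  simp only [_root_.map_mul, map_sum, map_pow, _root_.map_neg, _root_.map_one, map_natCast,
    eval_esymm', eval_psum'] at h
  rw [show ((m : ℝ) + 1) = ((m + 1 : ℕ) : ℝ) by push_cast; ring, h]
  rw [show ((-1 : ℝ)) ^ (m + 1 + 1) = (-1) ^ m by
    rw [show m + 1 + 1 = m + 2 * 1 by omega, pow_add, pow_mul]; norm_num]
  rw [Finset.mul_sum]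
  refine Finset.sum_nbij' (fun x => (m - x, x + 1)) (fun a => a.2 - 1) ?_ ?_ ?_ ?_ ?_
  · intro x hx
    simp only [Finset.mem_range] at hx
    simp only [Finset.mem_filter, Finset.HasAntidiagonal.mem_antidiagonal]
    omega
  · intro a ha
    simp only [Finset.mem_filter, Finset.HasAntidiagonal.mem_antidiagonal] at ha
    simp only [Finset.mem_range]
    omega
  · intro x hx
    simp only [Finset.mem_range] at hx
    dsimp only
    omega
  · intro a ha
    simp only [Finset.mem_filter, Finset.HasAntidiagonal.mem_antidiagonal] at ha
    simp only [Prod.ext_iff]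
    omega
  · intro x hx
    simp only [Finset.mem_range] at hx
    rw [← neg_one_pow_helper (i := x) (m := m) (by omega)]
    ring

lemma newtonInf_eq_sum {n : ℕ} (μ0 : ℝ) (μ : Fin n → ℝ) (A : Matrix (Fin n) (Fin n) ℝ) (k : ℕ) :
    newtonInf μ0 μ A k
      = ∑ i ∈ range (k + 1), ((-1 : ℝ) ^ i * esymmInf (k - i) μ0 μ) • A ^ i := by
  induction k with
  | zero => simp [newtonInf, esymmInf, esymm]
  | succ k ih =>
    rw [show newtonInf μ0 μ A (k + 1)
      = esymmInf (k + 1) μ0 μ • (1 : Matrix (Fin n) (Fin n) ℝ) - A * newtonInf μ0 μ A k from rfl]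
    rw [ih, Finset.mul_sum,
      Finset.sum_range_succ' (fun i => ((-1 : ℝ) ^ i * esymmInf (k + 1 - i) μ0 μ) • A ^ i) (k + 1),
      sub_eq_add_neg, add_comm, ← Finset.sum_neg_distrib]
    congr 1
    · refine Finset.sum_congr rfl fun i hi => ?_
      rw [Matrix.mul_smul, show A * A ^ i = A ^ (i + 1) from (pow_succ' A i).symm,
        Nat.succ_sub_succ, show ((-1 : ℝ)) ^ (i + 1) * esymmInf (k - i) μ0 μ
          = -((-1 : ℝ) ^ i * esymmInf (k - i) μ0 μ) by rw [pow_succ]; ring, neg_smul]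
    · simp

lemma conj_pow_aux {n : ℕ} (U D V : Matrix (Fin n) (Fin n) ℝ) (hUV : U * V = 1)
    (hVU : V * U = 1) (r : ℕ) : (U * D * V) ^ r = U * D ^ r * V := by
  induction r with
  | zero => simp [hUV]
  | succ r ih =>
    rw [pow_succ, ih, pow_succ]
    calc U * D ^ r * V * (U * D * V) = U * D ^ r * (V * U) * (D * V) := by
          simp only [Matrix.mul_assoc]
      _ = U * (D ^ r * D) * V := by rw [hVU, Matrix.mul_one]; simp only [Matrix.mul_assoc]

lemma trace_pow_eq {n : ℕ} {A : Matrix (Fin n) (Fin n) ℝ} (hA : A.IsHermitian) (r : ℕ) :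
    (A ^ r).trace = ∑ i, hA.eigenvalues i ^ r := by
  have hU : (hA.eigenvectorUnitary : Matrix (Fin n) (Fin n) ℝ)
      * star (hA.eigenvectorUnitary : Matrix (Fin n) (Fin n) ℝ) = 1 :=
    (Matrix.mem_unitaryGroup_iff).mp hA.eigenvectorUnitary.2
  have hU' : star (hA.eigenvectorUnitary : Matrix (Fin n) (Fin n) ℝ)
      * (hA.eigenvectorUnitary : Matrix (Fin n) (Fin n) ℝ) = 1 :=
    (Matrix.mem_unitaryGroup_iff').mp hA.eigenvectorUnitary.2
  conv_lhs => rw [hA.spectral_theorem, Unitary.conjStarAlgAut_apply, conj_pow_aux _ _ _ hU hU']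
  rw [Matrix.mul_assoc, Matrix.trace_mul_comm, Matrix.mul_assoc, hU', Matrix.mul_one,
    Matrix.diagonal_pow, Matrix.trace_diagonal]
  simp [RCLike.ofReal_real_eq_id]

lemma sum_triangle_comm {M : Type*} [AddCommMonoid M] (k : ℕ) (f : ℕ → ℕ → M) :
    ∑ i ∈ range (k + 1), ∑ j ∈ range (k + 1 - i), f i j
      = ∑ j ∈ range (k + 1), ∑ i ∈ range (k + 1 - j), f i j := by
  rw [Finset.sum_sigma', Finset.sum_sigma']
  refine Finset.sum_nbij' (fun x ↦ ⟨x.2, x.1⟩) (fun x ↦ ⟨x.2, x.1⟩) ?_ ?_ ?_ ?_ ?_ <;>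
    simp only [Finset.mem_sigma, Finset.mem_range, Sigma.forall] <;>
    intros <;> first | omega | rfl | trivial

/-- The key scalar identity. -/
lemma key_identity {n : ℕ} (k : ℕ) (μ0 : ℝ) (μ : Fin n → ℝ) :
    ∑ i ∈ range (k + 1), (-1 : ℝ) ^ i * esymmInf (k - i) μ0 μ * (∑ x, μ x ^ (i + 1))
      = (k + 1 : ℝ) * esymmInf (k + 1) μ0 μ - μ0 * esymmInf k μ0 μ := by
  have expand : ∑ i ∈ range (k + 1), (-1 : ℝ) ^ i * esymmInf (k - i) μ0 μ * (∑ x, μ x ^ (i + 1))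
      = ∑ i ∈ range (k + 1), ∑ j ∈ range (k + 1 - i),
          (-1 : ℝ) ^ i * (μ0 ^ j / (Nat.factorial j) * esymm (k - i - j) μ)
            * (∑ x, μ x ^ (i + 1)) := by
    refine Finset.sum_congr rfl fun i hi => ?_
    simp only [Finset.mem_range] at hi
    rw [esymmInf,
      Finset.mul_sum (range (k - i + 1)) (fun j => μ0 ^ j / (Nat.factorial j) * esymm (k - i - j) μ)
        ((-1 : ℝ) ^ i),
      Finset.sum_mul, show k - i + 1 = k + 1 - i by omega]
  rw [expand, sum_triangle_comm k (fun i j =>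
      (-1 : ℝ) ^ i * (μ0 ^ j / (Nat.factorial j) * esymm (k - i - j) μ) * (∑ x, μ x ^ (i + 1)))]
  have inner : ∀ j ∈ range (k + 1), ∑ i ∈ range (k + 1 - j),
        (-1 : ℝ) ^ i * (μ0 ^ j / (Nat.factorial j) * esymm (k - i - j) μ) * (∑ x, μ x ^ (i + 1))
      = μ0 ^ j / (Nat.factorial j) * ((((k - j : ℕ) : ℝ) + 1) * esymm (k - j + 1) μ) := by
    intro j hj
    simp only [Finset.mem_range] at hj
    rw [← newton_real (k - j) μ,
      Finset.mul_sum (range (k - j + 1))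
        (fun i => (-1 : ℝ) ^ i * esymm (k - j - i) μ * (∑ x, μ x ^ (i + 1)))
        (μ0 ^ j / (Nat.factorial j)),
      show k + 1 - j = k - j + 1 by omega]
    refine Finset.sum_congr rfl fun i hi => ?_
    rw [show k - i - j = k - j - i by omega]
    ring
  rw [Finset.sum_congr rfl inner]
  -- now the pure algebra on the right-hand side
  have rhs2 : μ0 * esymmInf k μ0 μ
      = ∑ j ∈ range (k + 2), (j : ℝ) * (μ0 ^ j / (Nat.factorial j)) * esymm (k + 1 - j) μ := by
    rw [esymmInf,
      Finset.mul_sum (range (k + 1)) (fun j => μ0 ^ j / (Nat.factorial j) * esymm (k - j) μ) μ0,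
      Finset.sum_range_succ' (fun j => (j : ℝ) * (μ0 ^ j / (Nat.factorial j))
        * esymm (k + 1 - j) μ) (k + 1)]
    simp only [Nat.cast_zero, zero_mul, add_zero]
    refine Finset.sum_congr rfl fun j hj => ?_
    have hfac : (Nat.factorial (j + 1) : ℝ) = ((j : ℝ) + 1) * Nat.factorial j := by
      rw [Nat.factorial_succ]; push_cast; ring
    have hne : (Nat.factorial j : ℝ) ≠ 0 := by positivity
    have hne1 : ((j : ℝ) + 1) ≠ 0 := by positivity
    rw [show k + 1 - (j + 1) = k - j by omega, hfac]
    push_cast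
    field_simp
    ring
  have rhs1 : (k + 1 : ℝ) * esymmInf (k + 1) μ0 μ
      = ∑ j ∈ range (k + 2), ((k : ℝ) + 1) * (μ0 ^ j / (Nat.factorial j)) * esymm (k + 1 - j) μ := by
    rw [esymmInf, Finset.mul_sum (range (k + 2))
      (fun j => μ0 ^ j / (Nat.factorial j) * esymm (k + 1 - j) μ) ((k : ℝ) + 1)]
    refine Finset.sum_congr rfl fun j hj => ?_
    ring
  rw [rhs1, rhs2, ← Finset.sum_sub_distrib,
    Finset.sum_range_succ (fun j => ((k : ℝ) + 1) * (μ0 ^ j / (Nat.factorial j))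
      * esymm (k + 1 - j) μ - (j : ℝ) * (μ0 ^ j / (Nat.factorial j)) * esymm (k + 1 - j) μ) (k + 1)]
  rw [show ((k : ℝ) + 1) * (μ0 ^ (k + 1) / (Nat.factorial (k + 1))) * esymm (k + 1 - (k + 1)) μ
      - ((k + 1 : ℕ) : ℝ) * (μ0 ^ (k + 1) / (Nat.factorial (k + 1))) * esymm (k + 1 - (k + 1)) μ
        = 0 by push_cast; ring, add_zero]
  refine Finset.sum_congr rfl fun j hj => ?_
  simp only [Finset.mem_range] at hj
  rw [show k - j + 1 = k + 1 - j by omega, Nat.cast_sub (show j ≤ k by omega)]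
  ring

/-- `trace(A ∘ T_k^∞(μ₀,A)) = (k+1) σ_{k+1}^∞(μ₀,μ) − μ₀ σ_k^∞(μ₀,μ)` for a symmetric matrix `A`
with eigenvalues `μ`. -/
theorem trace_mul_newtonInf {n : ℕ} (k : ℕ) (μ0 : ℝ) {A : Matrix (Fin n) (Fin n) ℝ}
    (hA : A.IsHermitian) :
    (A * newtonInf μ0 hA.eigenvalues A k).trace =
      (k + 1 : ℝ) * esymmInf (k + 1) μ0 hA.eigenvalues - μ0 * esymmInf k μ0 hA.eigenvalues := by
  rw [newtonInf_eq_sum, Finset.mul_sum]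
  simp only [Matrix.mul_smul, ← pow_succ']
  rw [Matrix.trace_sum]
  simp only [Matrix.trace_smul, smul_eq_mul, trace_pow_eq hA]
  rw [← key_identity k μ0 hA.eigenvalues]
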